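/- In the example of morphisms 2𝒪(−2) → 𝒪(−1) ⊕ 𝒪 on ℙ₂ with polarization μ₁ < 1/2: an element x = [[z₁, z₂],[q₁, q₂]] is G-stable if and only if (z₁, z₂) ≠ (0, 0) and for every z ∈ V*, the quadratic forms q₁ − z z₁ and q₂ − z z₂ are linearly independent. -/

import Mathlib

open MvPolynomial Module

/-- King stability, with respect to the polarization `(1/2, −μ₁, −μ₂)`, of the morphism
`2𝒪(−2) → 𝒪(−1) ⊕ 𝒪` on `ℙ₂ = ℙ(V)` (`dim V = 3`) given by the matrix
`[[z₁, z₂], [q₁, q₂]]`. -/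
def GredStable (μ₁ μ₂ : ℚ) (z₁ z₂ q₁ q₂ : MvPolynomial (Fin 3) ℂ) : Prop :=
  ∀ (M' : Submodule ℂ (Fin 2 → ℂ)) (N'₁ N'₂ : Submodule ℂ ℂ),
    (N'₁ = ⊥ → ∀ v ∈ M', v 0 • z₁ + v 1 • z₂ = 0) →
    (N'₂ = ⊥ → ∀ v ∈ M', v 0 • q₁ + v 1 • q₂ = 0) →
    ¬(M' = ⊥ ∧ N'₁ = ⊥ ∧ N'₂ = ⊥) →
    ¬(M' = ⊤ ∧ N'₁ = ⊤ ∧ N'₂ = ⊤) →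
    (1 / 2 : ℚ) * (finrank ℂ M' : ℚ) <
      μ₁ * (finrank ℂ N'₁ : ℚ) + μ₂ * (finrank ℂ N'₂ : ℚ)

/-- Characterization of `GredStable` for a single matrix. -/
lemma gredStable_iff (μ₁ μ₂ : ℚ) (hμsum : μ₁ + μ₂ = 1) (hμ₁pos : 0 < μ₁) (hμ₁ : μ₁ < 1 / 2)
    (z₁ z₂ Q₁ Q₂ : MvPolynomial (Fin 3) ℂ) :
    GredStable μ₁ μ₂ z₁ z₂ Q₁ Q₂ ↔
      ¬(z₁ = 0 ∧ z₂ = 0) ∧ LinearIndependent ℂ ![Q₁, Q₂] := by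
  constructor
  · intro h
    constructor
    · rintro ⟨hA, hB⟩
      have key := h ⊤ ⊥ ⊤ (fun _ v _ => by simp [hA, hB])
        (fun hc => absurd hc (by simp)) (by rintro ⟨_, _, hc⟩; exact absurd hc (by simp))
        (by rintro ⟨_, hc, _⟩; exact absurd hc (by simp))
      simp only [finrank_top, finrank_bot] at key
      have h2 : finrank ℂ (Fin 2 → ℂ) = 2 := by simp
      have h1 : finrank ℂ ℂ = 1 := by simp
      rw [h2, h1] at key
      push_cast at key
      linarith
    · rw [LinearIndependent.pair_iff]
      intro s t hst
      by_contra hne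
      have hvne : (![s, t] : Fin 2 → ℂ) ≠ 0 := by
        intro h0
        apply hne
        constructor
        · have := congrFun h0 0; simpa using this
        · have := congrFun h0 1; simpa using this
      have key := h (Submodule.span ℂ {![s, t]}) ⊤ ⊥
        (fun hc => absurd hc (by simp))
        (by
          intro _ v hv
          obtain ⟨c, rfl⟩ := Submodule.mem_span_singleton.mp hv
          simp only [Pi.smul_apply, Matrix.cons_val_zero, Matrix.cons_val_one,
            Matrix.head_cons, smul_eq_mul]
          rw [mul_smul, mul_smul, ← smul_add, hst, smul_zero])
        (by rintro ⟨hc, _⟩; exact hvne (Submodule.span_singleton_eq_bot.mp hc))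
        (by rintro ⟨_, _, hc⟩; exact absurd hc (by simp))
      rw [finrank_span_singleton hvne] at key
      simp only [finrank_top, finrank_bot] at key
      have h1 : finrank ℂ ℂ = 1 := by simp
      rw [h1] at key
      push_cast at key
      linarith
  · rintro ⟨hz, hQ⟩ M' N'₁ N'₂ h1 h2 hbot htop
    rw [LinearIndependent.pair_iff] at hQ
    have hM0 : N'₂ = ⊥ → M' = ⊥ := by
      intro hb
      by_contra hM
      obtain ⟨v, hvM, hv0⟩ := Submodule.ne_bot_iff _ |>.mp hM
      have hv := h2 hb v hvM
      obtain ⟨h0, h1'⟩ := hQ (v 0) (v 1) hv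
      apply hv0
      funext i
      fin_cases i <;> simpa
    have hMle : M' ≠ ⊤ → (finrank ℂ M' : ℚ) ≤ 1 := by
      intro hMt
      have := Submodule.finrank_lt (K := ℂ) (V := Fin 2 → ℂ) hMt
      have h2' : finrank ℂ (Fin 2 → ℂ) = 2 := by simp
      rw [h2'] at this
      exact_mod_cast Nat.lt_succ_iff.mp this
    have h1C : finrank ℂ ℂ = 1 := by simp
    rcases eq_bot_or_eq_top N'₁ with hN1 | hN1 <;>
      rcases eq_bot_or_eq_top N'₂ with hN2 | hN2
    · exact absurd ⟨hM0 hN2, hN1, hN2⟩ hbot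
    · -- N'₁ = ⊥, N'₂ = ⊤
      have hMt : M' ≠ ⊤ := by
        intro hMt
        apply hz
        constructor
        · have := h1 hN1 ![1, 0] (hMt ▸ Submodule.mem_top)
          simpa using this
        · have := h1 hN1 ![0, 1] (hMt ▸ Submodule.mem_top)
          simpa using this
      have hm := hMle hMt
      rw [hN1, hN2, finrank_bot, finrank_top, h1C]
      push_cast
      linarith
    · -- N'₁ = ⊤, N'₂ = ⊥
      rw [hN1, hN2, hM0 hN2]
      simp only [finrank_bot, finrank_top, h1C]
      push_cast
      linarith
    · -- N'₁ = ⊤, N'₂ = ⊤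
      have hMt : M' ≠ ⊤ := fun hMt => htop ⟨hMt, hN1, hN2⟩
      have hm := hMle hMt
      rw [hN1, hN2, finrank_top, h1C]
      push_cast
      linarith

theorem stmt18 (μ₁ μ₂ : ℚ) (hμsum : μ₁ + μ₂ = 1) (hμ₁pos : 0 < μ₁) (hμ₁ : μ₁ < 1 / 2)
    (z₁ z₂ q₁ q₂ : MvPolynomial (Fin 3) ℂ)
    (hz₁ : z₁.IsHomogeneous 1) (hz₂ : z₂.IsHomogeneous 1)
    (hq₁ : q₁.IsHomogeneous 2) (hq₂ : q₂.IsHomogeneous 2) :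
    (∀ z : MvPolynomial (Fin 3) ℂ, z.IsHomogeneous 1 →
        GredStable μ₁ μ₂ z₁ z₂ (q₁ + z * z₁) (q₂ + z * z₂)) ↔
      (¬(z₁ = 0 ∧ z₂ = 0) ∧
        ∀ z : MvPolynomial (Fin 3) ℂ, z.IsHomogeneous 1 →
          LinearIndependent ℂ ![q₁ - z * z₁, q₂ - z * z₂]) := by
  constructor
  · intro H
    constructor
    · exact ((gredStable_iff μ₁ μ₂ hμsum hμ₁pos hμ₁ _ _ _ _).mp
        (H 0 (isHomogeneous_zero _ _ _))).1
    · intro z hzh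
      have h := ((gredStable_iff μ₁ μ₂ hμsum hμ₁pos hμ₁ _ _ _ _).mp (H (-z) hzh.neg)).2
      have e1 : q₁ + -z * z₁ = q₁ - z * z₁ := by ring
      have e2 : q₂ + -z * z₂ = q₂ - z * z₂ := by ring
      rwa [e1, e2] at h
  · rintro ⟨hz, hQ⟩ z hzh
    refine (gredStable_iff μ₁ μ₂ hμsum hμ₁pos hμ₁ _ _ _ _).mpr ⟨hz, ?_⟩
    have h := hQ (-z) hzh.neg
    have e1 : q₁ - -z * z₁ = q₁ + z * z₁ := by ring
    have e2 : q₂ - -z * z₂ = q₂ + z * z₂ := by ring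
    rwa [e1, e2] at h
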